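/- Let κ < 0, ρ ∈ ℝ, and α > 0, with α < π/√ρ if ρ > 0. Set T = tan_ρ(α/2), S = sin_ρ(α), and σ = (√(1 − κS²) − 1)/(−κ·S·T). Then σ > 0, 1 + κσ²T² > 0, one has 2σT/(1 + κσ²T²) = S (equivalently sin_κ(2·arctan_κ(σ·T)) = sin_ρ(α)), and −log σ = log( −2κ·sin_ρ(α/2)² / (√(1 − κ·sin_ρ(α)²) − 1) ). -/

import Mathlib

open Real MeasureTheory Filter Asymptotics

/-- Inverse hyperbolic tangent. -/
noncomputable def artanh (y : ℝ) : ℝ := Real.log ((1 + y) / (1 - y)) / 2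

/-- The generalized sine function `sin_κ`. -/
noncomputable def sinK (κ t : ℝ) : ℝ :=
  if 0 < κ then Real.sin (Real.sqrt κ * t) / Real.sqrt κ
  else if κ < 0 then Real.sinh (Real.sqrt (-κ) * t) / Real.sqrt (-κ)
  else t

/-- The generalized cosine function `cos_κ = sin_κ'`. -/
noncomputable def cosK (κ t : ℝ) : ℝ :=
  if 0 < κ then Real.cos (Real.sqrt κ * t)
  else if κ < 0 then Real.cosh (Real.sqrt (-κ) * t)
  else 1

/-- The generalized tangent function `tan_κ`. -/
noncomputable def tanK (κ t : ℝ) : ℝ := sinK κ t / cosK κ t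

/-- The inverse function `arctan_κ` of `tan_κ`. -/
noncomputable def arctanK (κ x : ℝ) : ℝ :=
  if 0 < κ then Real.arctan (Real.sqrt κ * x) / Real.sqrt κ
  else if κ < 0 then _root_.artanh (Real.sqrt (-κ) * x) / Real.sqrt (-κ)
  else x

/-- `ω_{n-1}`, the (n-1)-volume of the unit sphere of ℝⁿ, i.e. `n` times the
volume of the unit ball. -/
noncomputable def omegaS (n : ℕ) : ℝ :=
  n * (volume (Metric.ball (0 : EuclideanSpace ℝ (Fin n)) 1)).toReal

/-- `A_κ(t)`: the volume of a geodesic sphere of radius `t` in the model space. -/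
noncomputable def AK (n : ℕ) (κ t : ℝ) : ℝ := omegaS n * sinK κ t ^ (n - 1)

/-- `V_κ(t)`: the volume of a geodesic ball of radius `t` in the model space. -/
noncomputable def VK (n : ℕ) (κ t : ℝ) : ℝ := omegaS n * ∫ s in (0:ℝ)..t, sinK κ s ^ (n - 1)

/-- The natural domain of `V_κ`: `[0, π/√κ)` when `κ > 0` and `[0, ∞)` otherwise. -/
noncomputable def domK (κ : ℝ) : Set ℝ :=
  if 0 < κ then Set.Ico 0 (Real.pi / Real.sqrt κ) else Set.Ici 0

/-- The range of `V_κ` (on its natural domain). -/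
noncomputable def rangeVK (n : ℕ) (κ : ℝ) : Set ℝ := VK n κ '' domK κ

/-- The inverse of `V_κ` on its natural domain. -/
noncomputable def VKinv (n : ℕ) (κ v : ℝ) : ℝ := sInf {t : ℝ | t ∈ domK κ ∧ VK n κ t = v}

/-- The isoperimetric profile `I_κ = A_κ ∘ V_κ⁻¹` of the model space. -/
noncomputable def IK (n : ℕ) (κ v : ℝ) : ℝ := AK n κ (VKinv n κ v)
/-- The co-Lipschitz constant of the optimal conformal azimuthal map in negative
target curvature.  Let `κ < 0`, `α > 0` (with `α < π/√ρ` if `ρ > 0`), and set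
`T = tan_ρ(α/2)`, `S = sin_ρ(α)` and `σ = (√(1-κS²)-1)/(-κST)`.  Then `σ > 0`,
`1 + κσ²T² > 0`, `2σT/(1+κσ²T²) = S` (equivalently
`sin_κ(2·arctan_κ(σT)) = sin_ρ(α)`), and
`-log σ = log(-2κ·sin_ρ(α/2)²/(√(1-κ·sin_ρ(α)²)-1))`. -/
lemma sinK_facts (ρ α : ℝ) (hα : 0 < α) (hρ : 0 < ρ → α < Real.pi / Real.sqrt ρ) :
    0 < sinK ρ (α/2) ∧ 0 < cosK ρ (α/2) ∧
      sinK ρ α = 2 * sinK ρ (α/2) * cosK ρ (α/2) := by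
  unfold sinK cosK
  rcases lt_trichotomy ρ 0 with h | h | h
  · have hk : (0:ℝ) < -ρ := by linarith
    have hsk : 0 < Real.sqrt (-ρ) := Real.sqrt_pos.mpr hk
    simp only [if_neg (not_lt.mpr h.le), if_pos h]
    refine ⟨div_pos (Real.sinh_pos_iff.mpr (by positivity)) hsk, Real.cosh_pos _, ?_⟩
    have : Real.sqrt (-ρ) * α = 2 * (Real.sqrt (-ρ) * (α/2)) := by ring
    rw [this, Real.sinh_two_mul]
    ring
  · simp only [h, lt_irrefl]
    norm_num
    exact ⟨hα, by ring⟩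
  · have hsk : 0 < Real.sqrt ρ := Real.sqrt_pos.mpr h
    have hlt : Real.sqrt ρ * α < Real.pi := by
      have := hρ h
      calc Real.sqrt ρ * α < Real.sqrt ρ * (Real.pi / Real.sqrt ρ) := by
            exact mul_lt_mul_of_pos_left this hsk
        _ = Real.pi := by field_simp
    simp only [if_pos h]
    have h2 : Real.sqrt ρ * (α/2) < Real.pi / 2 := by linarith
    have h0 : 0 < Real.sqrt ρ * (α/2) := by positivity
    refine ⟨div_pos (Real.sin_pos_of_pos_of_lt_pi h0 (by linarith [Real.pi_pos])) hsk,
      Real.cos_pos_of_mem_Ioo ⟨by linarith, h2⟩, ?_⟩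
    have : Real.sqrt ρ * α = 2 * (Real.sqrt ρ * (α/2)) := by ring
    rw [this, Real.sin_two_mul]
    ring

set_option maxHeartbeats 1000000 in
theorem optimal_conformal_sigma_negative_curvature (κ ρ α : ℝ) (hκ : κ < 0)
    (hα : 0 < α) (hρ : 0 < ρ → α < Real.pi / Real.sqrt ρ) :
    0 < (Real.sqrt (1 - κ * sinK ρ α ^ 2) - 1) / (-κ * sinK ρ α * tanK ρ (α / 2)) ∧
    (0 < 1 + κ * ((Real.sqrt (1 - κ * sinK ρ α ^ 2) - 1) /
        (-κ * sinK ρ α * tanK ρ (α / 2))) ^ 2 * tanK ρ (α / 2) ^ 2) ∧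
    (2 * ((Real.sqrt (1 - κ * sinK ρ α ^ 2) - 1) /
        (-κ * sinK ρ α * tanK ρ (α / 2))) * tanK ρ (α / 2) /
      (1 + κ * ((Real.sqrt (1 - κ * sinK ρ α ^ 2) - 1) /
        (-κ * sinK ρ α * tanK ρ (α / 2))) ^ 2 * tanK ρ (α / 2) ^ 2)
      = sinK ρ α) ∧
    (sinK κ (2 * arctanK κ (((Real.sqrt (1 - κ * sinK ρ α ^ 2) - 1) /
        (-κ * sinK ρ α * tanK ρ (α / 2))) * tanK ρ (α / 2))) = sinK ρ α) ∧
    (-Real.log ((Real.sqrt (1 - κ * sinK ρ α ^ 2) - 1) /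
        (-κ * sinK ρ α * tanK ρ (α / 2)))
      = Real.log (-2 * κ * sinK ρ (α / 2) ^ 2 /
          (Real.sqrt (1 - κ * sinK ρ α ^ 2) - 1))) := by
  obtain ⟨hs, hc, hdbl⟩ := sinK_facts ρ α hα hρ
  set s := sinK ρ (α/2) with hs_def
  set c := cosK ρ (α/2) with hc_def
  have hT : tanK ρ (α/2) = s / c := rfl
  set S := sinK ρ α with hS_def
  have hSpos : 0 < S := by rw [hdbl]; positivity
  have hTpos : 0 < tanK ρ (α/2) := by rw [hT]; positivity
  set T := tanK ρ (α/2) with hT_def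
  set k : ℝ := -κ with hk_def
  have hk : 0 < k := by simp [hk_def]; linarith
  set w := Real.sqrt (1 - κ * S ^ 2) with hw_def
  have hw2 : w ^ 2 = 1 + k * S ^ 2 := by
    rw [hw_def, Real.sq_sqrt (by nlinarith)]; ring
  have hw1 : 1 < w := by
    nlinarith [Real.sqrt_nonneg (1 - κ * S ^ 2), hw2, mul_pos hk (pow_pos hSpos 2)]
  have hden : -κ * S * T = k * S * T := by rw [hk_def]
  set σ := (w - 1) / (-κ * S * T) with hσ_def
  have hσpos : 0 < σ := by
    rw [hσ_def, hden]
    exact div_pos (by linarith) (by positivity)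
  have hu : σ * T = (w - 1) / (k * S) := by
    rw [hσ_def, hden]
    field_simp
  have hkS2 : k * S ^ 2 = (w - 1) * (w + 1) := by nlinarith
  have heq2 : 1 + κ * σ ^ 2 * T ^ 2 = 2 / (w + 1) := by
    have h1 : κ * σ ^ 2 * T ^ 2 = -(k * (σ * T) ^ 2) := by rw [hk_def]; ring
    rw [h1, hu]
    rw [div_pow]
    field_simp
    linear_combination (-(1 - w)) * hkS2 + ((1 - w) * S ^ 2) * hk_def
  have hpos2 : 0 < 1 + κ * σ ^ 2 * T ^ 2 := by
    rw [heq2]; positivity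
  have heq3 : 2 * σ * T / (1 + κ * σ ^ 2 * T ^ 2) = S := by
    rw [heq2]
    have h2 : 2 * σ * T = 2 * ((w - 1) / (k * S)) := by rw [← hu]; ring
    rw [h2]
    rw [div_eq_iff (by positivity : (2:ℝ) / (w + 1) ≠ 0)]
    field_simp
    linear_combination hw2 + S ^ 2 * hk_def
  refine ⟨hσpos, hpos2, heq3, ?_, ?_⟩
  · -- sinK goal
    have hknκ : -κ = k := rfl
    have hy : Real.sqrt k * (σ * T) > 0 := by positivity
    set y := Real.sqrt k * (σ * T) with hy_def
    have hy2 : y ^ 2 = k * (σ * T) ^ 2 := by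
      rw [hy_def, mul_pow, Real.sq_sqrt hk.le]
    have hylt : y < 1 := by
      have hlt : k * (σ * T) ^ 2 < 1 := by
        have : κ * σ ^ 2 * T ^ 2 = -(k * (σ * T) ^ 2) := by rw [hk_def]; ring
        nlinarith
      nlinarith
    unfold sinK arctanK _root_.artanh
    simp only [if_neg (not_lt.mpr hκ.le), if_pos hκ, hknκ]
    have hsk : 0 < Real.sqrt k := Real.sqrt_pos.mpr hk
    have harg : Real.sqrt k * (2 * (Real.log ((1 + y) / (1 - y)) / 2 / Real.sqrt k))
        = Real.log ((1 + y) / (1 - y)) := by field_simp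
    rw [harg]
    have hr : (0:ℝ) < (1 + y) / (1 - y) := by
      apply div_pos <;> linarith
    rw [Real.sinh_log hr]
    have h1y : (1:ℝ) - y ≠ 0 := by linarith
    have h1y' : (1:ℝ) + y ≠ 0 := by linarith
    rw [← heq3]
    have hκeq : 1 + κ * σ ^ 2 * T ^ 2 = 1 - y ^ 2 := by
      rw [hy2, hk_def]; ring
    rw [hκeq]
    rw [div_eq_div_iff (by positivity) (by nlinarith)]
    field_simp
    linear_combination (4 * (1 - y ^ 2)) * hy_def
  · -- log goal
    rw [← Real.log_inv]
    congr 1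
    rw [hσ_def, hden]
    rw [inv_div]
    rw [hdbl, hT]
    have hcne : c ≠ 0 := hc.ne'
    have hwne : w - 1 ≠ 0 := by linarith
    field_simp
    ring
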